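/- Let G be a finitely generated profinite group. Then the supremum of cardinalities of minimal topological generating sets of G is finite if and only if the Frattini subgroup of G has finite index in G. -/

import Mathlib

/-- The Frattini subgroup of a profinite group: the intersection of all maximal
open subgroups. -/
def frattiniOpen (G : Type*) [Group G] [TopologicalSpace G] : Subgroup G :=
  sInf {M : Subgroup G | IsOpen (M : Set G) ∧ IsCoatom M}

namespace FrattiniStatement10

open Set
open scoped Pointwise
set_option linter.unusedSectionVars false

section abs
variable {G : Type*} [Group G]

lemma sup_top_of_cover {N : Subgroup G} {Y : Set G} {y : G}
    (hcov : Y ⊆ ↑(Subgroup.closure (Y \ {y}) ⊔ N))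
    (ha : Subgroup.closure Y ⊔ N = ⊤) :
    Subgroup.closure (Y \ {y}) ⊔ N = ⊤ := by
  rw [eq_top_iff, ← ha]
  exact sup_le ((Subgroup.closure_le _).mpr hcov) le_sup_right

lemma notmemN {N : Subgroup G} {Y : Set G} {y : G}
    (hb : ∀ y ∈ Y, Subgroup.closure (Y \ {y}) ⊔ N ≠ ⊤)
    (ha : Subgroup.closure Y ⊔ N = ⊤) (hy : y ∈ Y) (hyN : y ∈ N) : False := by
  refine hb y hy (sup_top_of_cover ?_ ha)
  intro z hz
  by_cases hzy : z = y
  · rw [hzy]; exact (le_sup_right : N ≤ _) hyN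
  · exact (le_sup_left : Subgroup.closure (Y \ {y}) ≤ _)
      (Subgroup.subset_closure ⟨hz, hzy⟩)

lemma nocongr {N : Subgroup G} {Y : Set G} {y y' : G}
    (hb : ∀ y ∈ Y, Subgroup.closure (Y \ {y}) ⊔ N ≠ ⊤)
    (ha : Subgroup.closure Y ⊔ N = ⊤) (hy : y ∈ Y) (hy' : y' ∈ Y) (hne : y ≠ y')
    (hcong : y'⁻¹ * y ∈ N) : False := by
  refine hb y hy (sup_top_of_cover ?_ ha)
  intro z hz
  by_cases hzy : z = y
  · rw [hzy]
    have h1 : y' ∈ Subgroup.closure (Y \ {y}) ⊔ N :=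
      (le_sup_left : Subgroup.closure (Y \ {y}) ≤ _)
        (Subgroup.subset_closure ⟨hy', Ne.symm hne⟩)
    have h2 : y'⁻¹ * y ∈ Subgroup.closure (Y \ {y}) ⊔ N := (le_sup_right : N ≤ _) hcong
    simpa using mul_mem h1 h2
  · exact (le_sup_left : Subgroup.closure (Y \ {y}) ≤ _)
      (Subgroup.subset_closure ⟨hz, hzy⟩)

end abs


section main
variable {G : Type*} [Group G] [TopologicalSpace G] [IsTopologicalGroup G] [CompactSpace G]
  [TotallyDisconnectedSpace G]

lemma fin_of_open (H : Subgroup G) (h : IsOpen (H : Set G)) : H.FiniteIndex :=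
  have : Finite (G ⧸ H) := Subgroup.quotient_finite_of_isOpen H h
  Subgroup.finiteIndex_of_finite_quotient

lemma finite_above {G' : Type*} [Group G'] (N : Subgroup G') (hN : N.FiniteIndex) :
    {K : Subgroup G' | N ≤ K}.Finite := by
  have : Finite (G' ⧸ N) := @Subgroup.finite_quotient_of_finiteIndex _ _ _ hN
  have hinj : Set.InjOn (fun K : Subgroup G' => (QuotientGroup.mk '' (K : Set G') : Set (G' ⧸ N)))
      {K : Subgroup G' | N ≤ K} := by
    intro K₁ h₁ K₂ h₂ he
    have key : ∀ K₁ K₂ : Subgroup G', N ≤ K₂ →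
        (QuotientGroup.mk '' (K₁ : Set G') : Set (G' ⧸ N)) = QuotientGroup.mk '' (K₂ : Set G') →
        K₁ ≤ K₂ := by
      intro K₁ K₂ h₂ he x hx
      have : (QuotientGroup.mk x : G' ⧸ N) ∈ (QuotientGroup.mk '' (K₂ : Set G') : Set (G' ⧸ N)) := by
        rw [← he]; exact ⟨x, hx, rfl⟩
      obtain ⟨y, hy, hyx⟩ := this
      have : y⁻¹ * x ∈ N := (QuotientGroup.eq).1 hyx
      have : y⁻¹ * x ∈ K₂ := h₂ this
      simpa using mul_mem hy this
    exact le_antisymm (key K₁ K₂ h₂ he) (key K₂ K₁ h₁ he.symm)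
  exact Set.Finite.of_finite_image (Set.toFinite _) hinj

lemma exists_coatom_above (U : Subgroup G) (hU : IsOpen (U : Set G)) (hne : U ≠ ⊤) :
    ∃ M : Subgroup G, IsOpen (M : Set G) ∧ IsCoatom M ∧ U ≤ M := by
  have hfin : {K : Subgroup G | U ≤ K ∧ K ≠ ⊤}.Finite :=
    (finite_above U (fin_of_open U hU)).subset (fun K hK => hK.1)
  obtain ⟨M, hM, hmax⟩ := Set.Finite.exists_maximalFor id _ hfin ⟨U, le_rfl, hne⟩
  refine ⟨M, Subgroup.isOpen_mono hM.1 hU, ⟨hM.2, fun K hK => ?_⟩, hM.1⟩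
  by_contra hKt
  exact hK.ne (le_antisymm hK.le (hmax ⟨hM.1.trans hK.le, hKt⟩ hK.le))


variable {G : Type*} [Group G] [TopologicalSpace G] [IsTopologicalGroup G] [CompactSpace G]
  [TotallyDisconnectedSpace G]

lemma t2_of_td : T2Space G := by
  rw [IsTopologicalGroup.t2Space_iff_one_closed]
  have : connectedComponent (1 : G) = {1} :=
    totallyDisconnectedSpace_iff_connectedComponent_singleton.mp ‹_› 1
  rw [← this]
  exact isClosed_connectedComponent

lemma exists_coatom_above_closed (C : Subgroup G) (hC : IsClosed (C : Set G)) (hne : C ≠ ⊤) :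
    ∃ M : Subgroup G, IsOpen (M : Set G) ∧ IsCoatom M ∧ C ≤ M := by
  have : T2Space G := t2_of_td
  obtain ⟨g, hg⟩ : ∃ g : G, g ∉ C := by
    by_contra h
    push_neg at h
    exact hne ((Subgroup.eq_top_iff' C).2 h)
  -- the open set {x | g * x ∉ C} contains 1
  have hopen : IsOpen {x : G | g * x ∈ (C : Set G)ᶜ} :=
    (hC.isOpen_compl).preimage (continuous_const.mul continuous_id)
  have h1 : (1 : G) ∈ {x : G | g * x ∈ (C : Set G)ᶜ} := by simpa using hg
  obtain ⟨W, hWclopen, hW1, hWsub⟩ := compact_exists_isClopen_in_isOpen hopen h1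
  obtain ⟨V, hV⟩ := IsTopologicalGroup.exist_openNormalSubgroup_sub_clopen_nhds_of_one hWclopen hW1
  -- U := C ⊔ V is open and proper
  have hVopen : IsOpen ((V : Subgroup G) : Set G) := V.toOpenSubgroup.isOpen
  have hUopen : IsOpen ((C ⊔ (V : Subgroup G) : Subgroup G) : Set G) :=
    Subgroup.isOpen_mono le_sup_right hVopen
  have hUne : C ⊔ (V : Subgroup G) ≠ ⊤ := by
    intro htop
    have hg' : g ∈ C ⊔ (V : Subgroup G) := htop ▸ Subgroup.mem_top g
    have : g ∈ (C : Set G) * ((V : Subgroup G) : Set G) := by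
      rw [← Subgroup.mul_normal C (V : Subgroup G)]
      exact_mod_cast hg'
    obtain ⟨c, hc, v, hv, hcv⟩ := this
    have hvin : v⁻¹ ∈ (V : Subgroup G) := inv_mem hv
    have : g * v⁻¹ ∈ (C : Set G)ᶜ := hWsub (hV hvin)
    apply this
    rw [← hcv]
    simpa using hc
  obtain ⟨M, hMopen, hMco, hle⟩ := exists_coatom_above _ hUopen hUne
  exact ⟨M, hMopen, hMco, le_sup_left.trans hle⟩

/-- The main inductive construction for the hard direction. -/
lemma main_induction
    (hinf : {M : Subgroup G | IsOpen (M : Set G) ∧ IsCoatom M}.Infinite) (k : ℕ) :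
    ∃ (N : Subgroup G) (Y : Set G), N.Normal ∧ IsOpen (N : Set G) ∧ Y.Finite ∧
      k ≤ Y.ncard ∧ Subgroup.closure Y ⊔ N = ⊤ ∧
      ∀ y ∈ Y, Subgroup.closure (Y \ {y}) ⊔ N ≠ ⊤ := by
  classical
  induction k with
  | zero =>
      refine ⟨⊤, ∅, inferInstance, by simp, Set.finite_empty, by simp, by simp, by simp⟩
  | succ k ih =>
      obtain ⟨N, Y, hNn, hNo, hYf, hk, ha, hb⟩ := ih
      haveI hNfi : N.FiniteIndex := fin_of_open N hNo
      obtain ⟨M, hMmem, hMnle⟩ :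
          ∃ M, M ∈ {M : Subgroup G | IsOpen (M : Set G) ∧ IsCoatom M} ∧ ¬ N ≤ M := by
        obtain ⟨M, hM⟩ := (hinf.diff (finite_above N hNfi)).nonempty
        exact ⟨M, hM.1, hM.2⟩
      obtain ⟨hMo, hMco⟩ := hMmem
      haveI hMfi : M.FiniteIndex := fin_of_open M hMo
      have hMNtop : M ⊔ N = ⊤ := by
        refine hMco.2 _ (lt_of_le_of_ne le_sup_left fun he => hMnle ?_)
        rw [he]
        exact le_sup_right
      set N' : Subgroup G := N ⊓ M.normalCore with hN'def
      haveI hN'n : N'.Normal := Subgroup.normal_inf_normal N M.normalCore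
      haveI hN'fi : N'.FiniteIndex := by infer_instance
      have hN'closed : IsClosed (N' : Set G) := by
        have : (N' : Set G) = (N : Set G) ∩ (M.normalCore : Set G) := rfl
        rw [this]
        exact (Subgroup.isClosed_of_isOpen N hNo).inter
          (M.normalCore_isClosed (Subgroup.isClosed_of_isOpen M hMo))
      have hN'o : IsOpen (N' : Set G) :=
        Subgroup.isOpen_of_isClosed_of_finiteIndex N' hN'closed
      have hN'N : N' ≤ N := inf_le_left
      have hN'M : N' ≤ M := inf_le_right.trans M.normalCore_le
      -- lifts of elements of Y into M
      have hlift : ∀ y : G, ∃ m, m ∈ M ∧ y⁻¹ * m ∈ N := by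
        intro y
        have : y ∈ ((M ⊔ N : Subgroup G) : Set G) := by rw [hMNtop]; trivial
        rw [Subgroup.mul_normal M N] at this
        obtain ⟨m, hm, n, hn, hmn⟩ := this
        exact ⟨m, hm, by rw [← hmn]; group; simpa using hn⟩
      set l : G → G := fun y => (hlift y).choose with hldef
      have hl : ∀ y : G, l y ∈ M ∧ y⁻¹ * l y ∈ N := fun y => (hlift y).choose_spec
      set Yh : Set G := l '' Y with hYhdef
      have hYhM : Yh ⊆ (M : Set G) := by rintro z ⟨y, hy, rfl⟩; exact (hl y).1
      have hinjOn : Set.InjOn l Y := by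
        intro y hy y' hy' he
        by_contra hne
        refine nocongr hb ha hy hy' hne ?_
        have h1 : y'⁻¹ * l y' ∈ N := (hl y').2
        have h2 : y⁻¹ * l y ∈ N := (hl y).2
        have : (y'⁻¹ * l y') * (y⁻¹ * l y)⁻¹ ∈ N := mul_mem h1 (inv_mem h2)
        rw [he] at this
        have he2 : (y'⁻¹ * l y') * (y⁻¹ * l y')⁻¹ = y'⁻¹ * y := by group
        rwa [← he2]
      have hYhnotN : ∀ z ∈ Yh, z ∉ N := by
        rintro z ⟨y, hy, rfl⟩ hzN
        refine notmemN hb ha hy ?_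
        have : y⁻¹ * l y ∈ N := (hl y).2
        have hy' : y = l y * (y⁻¹ * l y)⁻¹ := by group
        rw [hy']
        exact mul_mem hzN (inv_mem this)
      have haYh : Subgroup.closure Yh ⊔ N = ⊤ := by
        rw [eq_top_iff, ← ha]
        refine sup_le ((Subgroup.closure_le _).mpr ?_) le_sup_right
        intro y hy
        have h1 : l y ∈ Subgroup.closure Yh ⊔ N :=
          (le_sup_left : Subgroup.closure Yh ≤ _) (Subgroup.subset_closure ⟨y, hy, rfl⟩)
        have h2 : (y⁻¹ * l y)⁻¹ ∈ Subgroup.closure Yh ⊔ N :=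
          inv_mem ((le_sup_right : N ≤ _) (hl y).2)
        have hy' : y = l y * (y⁻¹ * l y)⁻¹ := by group
        rw [hy']
        exact mul_mem h1 h2
      -- coset representatives of N modulo N'
      haveI : Finite (G ⧸ N') := Subgroup.finite_quotient_of_finiteIndex
      set T : Set G := (fun q : G ⧸ N' => q.out) '' (QuotientGroup.mk '' (N : Set G)) with hTdef
      have hTfin : T.Finite := (Set.toFinite _).image _
      have hout : ∀ n : G, (QuotientGroup.mk n : G ⧸ N').out⁻¹ * n ∈ N' := by
        intro n
        have : (QuotientGroup.mk ((QuotientGroup.mk n : G ⧸ N').out) : G ⧸ N')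
            = QuotientGroup.mk n := Quotient.out_eq _
        exact (QuotientGroup.eq).1 this
      have hTN : T ⊆ (N : Set G) := by
        rintro t ⟨q, ⟨n, hn, rfl⟩, rfl⟩
        have h1 := hout n
        have h2 : (QuotientGroup.mk n : G ⧸ N').out = n * (((QuotientGroup.mk n : G ⧸ N').out)⁻¹ * n)⁻¹ := by
          group
        show (QuotientGroup.mk n : G ⧸ N').out ∈ (N : Set G)
        rw [h2]
        exact mul_mem hn (inv_mem (hN'N h1))
      have hTcover : ∀ n ∈ N, ∃ t ∈ T, t⁻¹ * n ∈ N' := by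
        intro n hn
        exact ⟨(QuotientGroup.mk n : G ⧸ N').out, ⟨QuotientGroup.mk n, ⟨n, hn, rfl⟩, rfl⟩, hout n⟩
      -- generation mod N'
      have hfull : Subgroup.closure (Yh ∪ T) ⊔ N' = ⊤ := by
        rw [eq_top_iff, ← haYh]
        refine sup_le ?_ ?_
        · exact le_sup_left.trans' (Subgroup.closure_mono Set.subset_union_left)
        · intro n hn
          obtain ⟨t, ht, htn⟩ := hTcover n hn
          have h1 : t ∈ Subgroup.closure (Yh ∪ T) ⊔ N' :=
            (le_sup_left : Subgroup.closure (Yh ∪ T) ≤ _)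
              (Subgroup.subset_closure (Set.subset_union_right ht))
          have h2 : t⁻¹ * n ∈ Subgroup.closure (Yh ∪ T) ⊔ N' := (le_sup_right : N' ≤ _) htn
          simpa using mul_mem h1 h2
      -- minimize the added part
      set Tf : Finset G := hTfin.toFinset with hTfdef
      set cands : Finset (Finset G) :=
        Tf.powerset.filter (fun s => Subgroup.closure (Yh ∪ ↑s) ⊔ N' = ⊤) with hcandsdef
      have hcne : cands.Nonempty := by
        refine ⟨Tf, Finset.mem_filter.mpr ⟨Finset.mem_powerset_self _, ?_⟩⟩
        rwa [Set.Finite.coe_toFinset]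
      obtain ⟨S₀, hS₀mem, hS₀min⟩ := cands.exists_min_image Finset.card hcne
      have hS₀sub : (S₀ : Set G) ⊆ T := by
        have := (Finset.mem_filter.mp hS₀mem).1
        rw [Finset.mem_powerset] at this
        intro x hx
        have := this hx
        rwa [Set.Finite.mem_toFinset] at this
      have hS₀gen : Subgroup.closure (Yh ∪ ↑S₀) ⊔ N' = ⊤ := (Finset.mem_filter.mp hS₀mem).2
      have hS₀ne : S₀.Nonempty := by
        rw [Finset.nonempty_iff_ne_empty]
        rintro rfl
        have hle : Subgroup.closure (Yh ∪ (↑(∅ : Finset G) : Set G)) ⊔ N' ≤ M := by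
          refine sup_le ((Subgroup.closure_le _).mpr ?_) hN'M
          simpa using hYhM
        rw [hS₀gen] at hle
        exact hMco.1 (top_le_iff.mp hle)
      -- the new pair
      refine ⟨N', Yh ∪ ↑S₀, hN'n, hN'o, (hYf.image l).union (S₀.finite_toSet), ?_, hS₀gen, ?_⟩
      · -- cardinality
        have hdisj : Disjoint Yh (↑S₀ : Set G) := by
          rw [Set.disjoint_left]
          intro z hz hz'
          exact hYhnotN z hz (hTN (hS₀sub hz'))
        rw [Set.ncard_union_eq hdisj (hYf.image l) (S₀.finite_toSet)]
        have h1 : k ≤ Yh.ncard := by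
          rwa [hYhdef, Set.ncard_image_of_injOn hinjOn]
        have h2 : 1 ≤ (↑S₀ : Set G).ncard := by
          rw [Set.ncard_coe_finset]
          exact hS₀ne.card_pos
        omega
      · -- minimality
        intro w hw
        rcases hw with hwY | hwS
        · -- w is a lifted element
          obtain ⟨y, hy, rfl⟩ := hwY
          intro htop
          refine hb y hy ?_
          rw [eq_top_iff, ← htop]
          refine sup_le ((Subgroup.closure_le _).mpr ?_) (hN'N.trans le_sup_right)
          rintro z ⟨hz, hzw⟩
          rcases hz with hzY | hzS
          · obtain ⟨y'', hy'', rfl⟩ := hzY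
            have hne : y'' ≠ y := fun he => hzw (by rw [he]; exact Set.mem_singleton _)
            have h1 : y'' ∈ Subgroup.closure (Y \ {y}) ⊔ N :=
              (le_sup_left : Subgroup.closure (Y \ {y}) ≤ _)
                (Subgroup.subset_closure ⟨hy'', hne⟩)
            have h2 : y''⁻¹ * l y'' ∈ Subgroup.closure (Y \ {y}) ⊔ N :=
              (le_sup_right : N ≤ _) (hl y'').2
            simpa using mul_mem h1 h2
          · exact (le_sup_right : N ≤ _) (hTN (hS₀sub hzS))
        · -- w is in the added finite part
          have hwYh : w ∉ Yh := fun hww => hYhnotN w hww (hTN (hS₀sub hwS))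
          intro htop
          have hseteq : (Yh ∪ ↑S₀) \ {w} = Yh ∪ ↑(S₀.erase w) := by
            rw [Set.union_diff_distrib, Finset.coe_erase]
            congr 1
            rw [Set.diff_singleton_eq_self hwYh]
          have hmem2 : S₀.erase w ∈ cands := by
            refine Finset.mem_filter.mpr ⟨Finset.mem_powerset.mpr
              ((Finset.erase_subset _ _).trans (Finset.mem_powerset.mp
                (Finset.mem_filter.mp hS₀mem).1)), ?_⟩
            rw [← hseteq]
            exact htop
          have := hS₀min _ hmem2
          have hlt : (S₀.erase w).card < S₀.card :=
            Finset.card_erase_lt_of_mem (by exact_mod_cast hwS)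
          omega


lemma frattini_le {M : Subgroup G} (h1 : IsOpen (M : Set G)) (h2 : IsCoatom M) :
    frattiniOpen G ≤ M := sInf_le ⟨h1, h2⟩

lemma frattini_isClosed : IsClosed ((frattiniOpen G : Subgroup G) : Set G) := by
  rw [frattiniOpen, Subgroup.coe_sInf]
  exact isClosed_biInter (fun K hK => Subgroup.isClosed_of_isOpen K hK.1)

lemma bounded_of_finiteIndex (hfi : (frattiniOpen G).FiniteIndex) :
    ∃ b : ℕ, ∀ Y : Set G,
      ((Subgroup.closure Y).topologicalClosure = ⊤ ∧
        ∀ Z ⊂ Y, (Subgroup.closure Z).topologicalClosure ≠ ⊤) →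
      Y.Finite ∧ Y.ncard ≤ b := by
  classical
  set Φ := frattiniOpen G with hΦdef
  haveI : Φ.FiniteIndex := hfi
  have hopen : IsOpen (Φ : Set G) :=
    Subgroup.isOpen_of_isClosed_of_finiteIndex Φ frattini_isClosed
  haveI hfinsub : Finite {K : Subgroup G // Φ ≤ K} := (finite_above Φ hfi).to_subtype
  refine ⟨Nat.card {K : Subgroup G // Φ ≤ K}, fun Y ⟨hgen, hmin⟩ => ?_⟩
  set H : G → Subgroup G := fun y => (Subgroup.closure (Y \ {y})).topologicalClosure ⊔ Φ with hH
  have hHopen : ∀ y, IsOpen ((H y : Subgroup G) : Set G) :=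
    fun y => Subgroup.isOpen_mono le_sup_right hopen
  have hHne : ∀ y ∈ Y, H y ≠ ⊤ := by
    intro y hy
    have hC : (Subgroup.closure (Y \ {y})).topologicalClosure ≠ ⊤ :=
      hmin _ (Set.sdiff_singleton_ssubset.mpr hy)
    obtain ⟨M, hMopen, hMco, hle⟩ := exists_coatom_above_closed _
      (Subgroup.isClosed_topologicalClosure _) hC
    have : H y ≤ M := sup_le hle (frattini_le hMopen hMco)
    exact fun htop => hMco.1 (top_le_iff.mp (htop ▸ this))
  have hmem : ∀ y z : G, z ∈ Y → z ≠ y → z ∈ H y := by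
    intro y z hz hne
    have : z ∈ (Subgroup.closure (Y \ {y})).topologicalClosure :=
      Subgroup.le_topologicalClosure _ (Subgroup.subset_closure (by exact ⟨hz, hne⟩))
    exact (le_sup_left : _ ≤ H y) this
  have hinj : Set.InjOn H Y := by
    intro y hy y' hy' he
    by_contra hne
    have hYsub : Y ⊆ (H y : Set G) := by
      intro z hz
      by_cases hzy : z = y
      · subst hzy
        exact he ▸ hmem y' z hz hne
      · exact hmem y z hz hzy
    have : (Subgroup.closure Y).topologicalClosure ≤ H y :=
      Subgroup.topologicalClosure_minimal _ (Subgroup.closure_le _ |>.mpr hYsub)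
        (Subgroup.isClosed_of_isOpen _ (hHopen y))
    exact hHne y hy (top_le_iff.mp (hgen ▸ this))
  set f : Y → {K : Subgroup G // Φ ≤ K} := fun y => ⟨H y, le_sup_right⟩ with hf
  have hfinj : Function.Injective f := by
    intro a b hab
    exact Subtype.ext (hinj a.2 b.2 (congrArg Subtype.val hab))
  have hYfin : Y.Finite := Set.finite_coe_iff.mp (Finite.of_injective f hfinj)
  refine ⟨hYfin, ?_⟩
  rw [← Nat.card_coe_set_eq]
  exact Nat.card_le_card_of_injective f hfinj

lemma tcl_mono {H K : Subgroup G} (h : H ≤ K) :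
    H.topologicalClosure ≤ K.topologicalClosure :=
  Subgroup.topologicalClosure_minimal _ (h.trans (Subgroup.le_topologicalClosure _))
    (Subgroup.isClosed_topologicalClosure _)

lemma exists_big_minimal
    (hfg : ∃ S : Finset G, (Subgroup.closure (S : Set G)).topologicalClosure = ⊤)
    (hinf : {M : Subgroup G | IsOpen (M : Set G) ∧ IsCoatom M}.Infinite) (b : ℕ) :
    ∃ Y : Set G,
      ((Subgroup.closure Y).topologicalClosure = ⊤ ∧
        ∀ Z ⊂ Y, (Subgroup.closure Z).topologicalClosure ≠ ⊤) ∧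
      Y.Finite ∧ b + 1 ≤ Y.ncard := by
  classical
  obtain ⟨N, Y, hNn, hNo, hYf, hk, ha, hb⟩ := main_induction hinf (b + 1)
  obtain ⟨F, hF⟩ := hfg
  have hlift : ∀ f : G, ∃ n, n ∈ N ∧ f * n⁻¹ ∈ Subgroup.closure Y := by
    intro f
    have : f ∈ ((Subgroup.closure Y ⊔ N : Subgroup G) : Set G) := by rw [ha]; trivial
    rw [Subgroup.mul_normal _ N] at this
    obtain ⟨c, hc, n, hn, hcn⟩ := this
    refine ⟨n, hn, ?_⟩
    rw [← hcn]
    simpa using hc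
  set nf : G → G := fun f => (hlift f).choose with hnfdef
  have hnf : ∀ f : G, nf f ∈ N ∧ f * (nf f)⁻¹ ∈ Subgroup.closure Y :=
    fun f => (hlift f).choose_spec
  set T : Set G := nf '' (F : Set G) with hTdef
  have hTfin : T.Finite := F.finite_toSet.image _
  have hTN : T ⊆ (N : Set G) := by rintro t ⟨f, hf, rfl⟩; exact (hnf f).1
  have htop : (Subgroup.closure (Y ∪ T)).topologicalClosure = ⊤ := by
    rw [eq_top_iff, ← hF]
    refine tcl_mono ((Subgroup.closure_le _).mpr ?_)
    intro f hf
    have h1 : f * (nf f)⁻¹ ∈ Subgroup.closure (Y ∪ T) :=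
      Subgroup.closure_mono Set.subset_union_left (hnf f).2
    have h2 : nf f ∈ Subgroup.closure (Y ∪ T) :=
      Subgroup.subset_closure (Set.subset_union_right ⟨f, hf, rfl⟩)
    simpa using mul_mem h1 h2
  set Tf : Finset G := hTfin.toFinset with hTfdef
  set cands : Finset (Finset G) :=
    Tf.powerset.filter (fun s => (Subgroup.closure (Y ∪ ↑s)).topologicalClosure = ⊤)
    with hcandsdef
  have hcne : cands.Nonempty := by
    refine ⟨Tf, Finset.mem_filter.mpr ⟨Finset.mem_powerset_self _, ?_⟩⟩
    rwa [Set.Finite.coe_toFinset]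
  obtain ⟨S₀, hS₀mem, hS₀min⟩ := cands.exists_min_image Finset.card hcne
  have hS₀sub : (S₀ : Set G) ⊆ T := by
    have h := (Finset.mem_filter.mp hS₀mem).1
    rw [Finset.mem_powerset] at h
    intro x hx
    have := h hx
    rwa [Set.Finite.mem_toFinset] at this
  have hS₀gen : (Subgroup.closure (Y ∪ ↑S₀)).topologicalClosure = ⊤ :=
    (Finset.mem_filter.mp hS₀mem).2
  have hYnotN : ∀ y ∈ Y, y ∉ N := fun y hy hyN => notmemN hb ha hy hyN
  refine ⟨Y ∪ ↑S₀, ⟨hS₀gen, ?_⟩, hYf.union S₀.finite_toSet, ?_⟩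
  · -- minimality
    intro Z hZ htopZ
    obtain ⟨w, hwY', hwZ⟩ := Set.exists_of_ssubset hZ
    have hZsub : Z ⊆ (Y ∪ ↑S₀) \ {w} :=
      fun z hz => ⟨hZ.subset hz, fun he => hwZ (he ▸ hz)⟩
    have hne : (Subgroup.closure ((Y ∪ ↑S₀) \ {w})).topologicalClosure ≠ ⊤ := by
      rcases hwY' with hwY | hwS
      · -- w comes from Y
        set K : Subgroup G := Subgroup.closure (Y \ {w}) ⊔ N with hKdef
        have hKopen : IsOpen (K : Set G) := Subgroup.isOpen_mono le_sup_right hNo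
        have hsub : (Y ∪ ↑S₀) \ {w} ⊆ (K : Set G) := by
          rintro z ⟨hz, hzw⟩
          rcases hz with hzY | hzS
          · exact (le_sup_left : Subgroup.closure (Y \ {w}) ≤ K)
              (Subgroup.subset_closure ⟨hzY, hzw⟩)
          · exact (le_sup_right : N ≤ K) (hTN (hS₀sub hzS))
        have hle : (Subgroup.closure ((Y ∪ ↑S₀) \ {w})).topologicalClosure ≤ K :=
          Subgroup.topologicalClosure_minimal _ ((Subgroup.closure_le _).mpr hsub)
            (Subgroup.isClosed_of_isOpen K hKopen)
        intro he
        exact hb w hwY (top_le_iff.mp (he ▸ hle))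
      · -- w comes from S₀
        have hwY : w ∉ Y := fun hwY => hYnotN w hwY (hTN (hS₀sub hwS))
        have hseteq : (Y ∪ ↑S₀) \ {w} = Y ∪ ↑(S₀.erase w) := by
          rw [Set.union_diff_distrib, Finset.coe_erase]
          congr 1
          rw [Set.diff_singleton_eq_self hwY]
        intro he
        have hmem2 : S₀.erase w ∈ cands := by
          refine Finset.mem_filter.mpr ⟨Finset.mem_powerset.mpr
            ((Finset.erase_subset _ _).trans (Finset.mem_powerset.mp
              (Finset.mem_filter.mp hS₀mem).1)), ?_⟩
          rw [← hseteq]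
          exact he
        have h1 := hS₀min _ hmem2
        have hlt : (S₀.erase w).card < S₀.card :=
          Finset.card_erase_lt_of_mem (by exact_mod_cast hwS)
        omega
    exact hne (by rw [eq_top_iff, ← htopZ]; exact tcl_mono (Subgroup.closure_mono hZsub))
  · -- size
    calc b + 1 ≤ Y.ncard := hk
      _ ≤ (Y ∪ ↑S₀).ncard :=
        Set.ncard_le_ncard Set.subset_union_left (hYf.union S₀.finite_toSet)


lemma finiteIndex_of_finite_coatoms
    (h : {M : Subgroup G | IsOpen (M : Set G) ∧ IsCoatom M}.Finite) :
    (frattiniOpen G).FiniteIndex := by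
  haveI := h.to_subtype
  rw [frattiniOpen, sInf_eq_iInf']
  exact Subgroup.finiteIndex_iInf fun K => fin_of_open _ K.2.1

end main

end FrattiniStatement10

/-- For a finitely generated profinite group `G`, the supremum of
the cardinalities of minimal topological generating sets of `G` is finite iff the
Frattini subgroup of `G` has finite index. -/
theorem sup_minimal_generating_sets_finite_iff_frattini_finiteIndex
    {G : Type*} [Group G] [TopologicalSpace G] [IsTopologicalGroup G]
    [CompactSpace G] [TotallyDisconnectedSpace G]
    (hfg : ∃ S : Finset G, (Subgroup.closure (S : Set G)).topologicalClosure = ⊤) :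
    (∃ b : ℕ, ∀ Y : Set G,
        ((Subgroup.closure Y).topologicalClosure = ⊤ ∧
          ∀ Z ⊂ Y, (Subgroup.closure Z).topologicalClosure ≠ ⊤) →
        Y.Finite ∧ Y.ncard ≤ b) ↔
      (frattiniOpen G).FiniteIndex := by
  constructor
  · rintro ⟨b, hbd⟩
    by_contra hfi
    have hinf : {M : Subgroup G | IsOpen (M : Set G) ∧ IsCoatom M}.Infinite := by
      by_contra h2
      rw [Set.not_infinite] at h2
      exact hfi (FrattiniStatement10.finiteIndex_of_finite_coatoms h2)
    obtain ⟨Y, hprop, hfin, hcard⟩ := FrattiniStatement10.exists_big_minimal hfg hinf b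
    have := (hbd Y hprop).2
    omega
  · exact FrattiniStatement10.bounded_of_finiteIndex
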